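/- Let s > n/2. There exists a constant C = C(s) > 0 such that for all h ∈ (0,1], all u in the standard Sobolev space H^s(R^n), and all v in the semiclassical Sobolev space H_h^s(R^n), one has ‖uv‖_{H_h^s} ≤ C ‖u‖_{H^s} ‖v‖_{H_h^s}. -/

import Mathlib

open MeasureTheory Real Set Convolution
open scoped ENNReal

private lemma key_scalar {s : ℝ} (hs : 0 < s) {h x y z : ℝ} (h0 : 0 ≤ h) (h1 : h ≤ 1)
    (hx : 0 ≤ x) (hy : 0 ≤ y) (hz : 0 ≤ z) (hzxy : z ≤ x + y) :
    (1 + h ^ 2 * z ^ 2) ^ (s / 2) ≤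
      2 ^ s * ((1 + x ^ 2) ^ (s / 2) * (1 + h ^ 2 * y ^ 2) ^ (s / 2) *
        ((1 + x ^ 2) ^ (-(s / 2)) + (1 + y ^ 2) ^ (-(s / 2)))) := by
  have hx2 : (0:ℝ) < 1 + x ^ 2 := by positivity
  have hy2 : (0:ℝ) < 1 + y ^ 2 := by positivity
  have hhy2 : (0:ℝ) < 1 + h ^ 2 * y ^ 2 := by positivity
  have hh2 : h ^ 2 ≤ 1 := pow_le_one₀ h0 h1
  have h4 : ∀ a : ℝ, 0 < a → (4 * a) ^ (s / 2) = 2 ^ s * a ^ (s / 2) := by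
    intro a ha
    rw [Real.mul_rpow (by norm_num) ha.le, show (4:ℝ) = (2:ℝ) ^ (2:ℕ) by norm_num,
      ← Real.rpow_natCast (2:ℝ) 2, ← Real.rpow_mul (by norm_num : (0:ℝ) ≤ 2)]
    congr 1
    push_cast
    ring
  rcases le_total y x with hyx | hxy
  · have hz2 : z ^ 2 ≤ 4 * x ^ 2 := by nlinarith
    have hA : h ^ 2 * z ^ 2 ≤ h ^ 2 * (4 * x ^ 2) :=
      mul_le_mul_of_nonneg_left hz2 (sq_nonneg h)
    have hB : h ^ 2 * z ^ 2 * y ^ 2 ≤ h ^ 2 * (4 * x ^ 2) * y ^ 2 :=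
      mul_le_mul_of_nonneg_right hA (sq_nonneg y)
    have hx2y2 : y ^ 2 ≤ x ^ 2 := by nlinarith
    have hC : h ^ 2 * (x ^ 2 - y ^ 2) ≤ x ^ 2 - y ^ 2 := by
      nlinarith [mul_le_mul_of_nonneg_right hh2 (sub_nonneg.2 hx2y2)]
    have step1 : 1 + h ^ 2 * z ^ 2 ≤ 4 * ((1 + h ^ 2 * y ^ 2) * ((1 + x ^ 2) / (1 + y ^ 2))) := by
      rw [show (4:ℝ) * ((1 + h ^ 2 * y ^ 2) * ((1 + x ^ 2) / (1 + y ^ 2)))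
          = 4 * (1 + h ^ 2 * y ^ 2) * (1 + x ^ 2) / (1 + y ^ 2) by ring, le_div_iff₀ hy2]
      nlinarith [hA, hB, hC]
    calc (1 + h ^ 2 * z ^ 2) ^ (s / 2)
        ≤ (4 * ((1 + h ^ 2 * y ^ 2) * ((1 + x ^ 2) / (1 + y ^ 2)))) ^ (s / 2) :=
          Real.rpow_le_rpow (by positivity) step1 (by positivity)
      _ = 2 ^ s * ((1 + x ^ 2) ^ (s / 2) * (1 + h ^ 2 * y ^ 2) ^ (s / 2) *
            (1 + y ^ 2) ^ (-(s / 2))) := by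
          rw [h4 _ (by positivity), Real.mul_rpow hhy2.le (by positivity),
            Real.div_rpow hx2.le hy2.le, Real.rpow_neg hy2.le]
          ring
      _ ≤ _ := by
          have hu : (0:ℝ) ≤ (1 + x ^ 2) ^ (-(s / 2)) := by positivity
          have hAB : (0:ℝ) ≤ (1 + x ^ 2) ^ (s / 2) * (1 + h ^ 2 * y ^ 2) ^ (s / 2) := by positivity
          have h2s : (0:ℝ) ≤ 2 ^ s := by positivity
          nlinarith [mul_le_mul_of_nonneg_left
            (le_add_of_nonneg_left hu : (1 + y ^ 2) ^ (-(s / 2)) ≤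
              (1 + x ^ 2) ^ (-(s / 2)) + (1 + y ^ 2) ^ (-(s / 2))) hAB]
  · have hz2 : z ^ 2 ≤ 4 * y ^ 2 := by nlinarith
    have hA : h ^ 2 * z ^ 2 ≤ h ^ 2 * (4 * y ^ 2) :=
      mul_le_mul_of_nonneg_left hz2 (sq_nonneg h)
    have step1 : 1 + h ^ 2 * z ^ 2 ≤ 4 * (1 + h ^ 2 * y ^ 2) := by nlinarith
    calc (1 + h ^ 2 * z ^ 2) ^ (s / 2)
        ≤ (4 * (1 + h ^ 2 * y ^ 2)) ^ (s / 2) :=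
          Real.rpow_le_rpow (by positivity) step1 (by positivity)
      _ = 2 ^ s * (1 + h ^ 2 * y ^ 2) ^ (s / 2) := h4 _ hhy2
      _ ≤ _ := by
          have hAu : (1 + x ^ 2) ^ (s / 2) * (1 + x ^ 2) ^ (-(s / 2)) = 1 := by
            rw [← Real.rpow_add hx2]; simp
          have hA' : (0:ℝ) ≤ (1 + x ^ 2) ^ (s / 2) := by positivity
          have hB' : (0:ℝ) ≤ (1 + h ^ 2 * y ^ 2) ^ (s / 2) := by positivity
          have hv : (0:ℝ) ≤ (1 + y ^ 2) ^ (-(s / 2)) := by positivity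
          have h2s : (0:ℝ) ≤ 2 ^ s := by positivity
          have expand : (1 + x ^ 2) ^ (s / 2) * (1 + h ^ 2 * y ^ 2) ^ (s / 2) *
              ((1 + x ^ 2) ^ (-(s / 2)) + (1 + y ^ 2) ^ (-(s / 2)))
              = (1 + h ^ 2 * y ^ 2) ^ (s / 2) + (1 + x ^ 2) ^ (s / 2) *
                (1 + h ^ 2 * y ^ 2) ^ (s / 2) * (1 + y ^ 2) ^ (-(s / 2)) := by
            linear_combination ((1 + h ^ 2 * y ^ 2) ^ (s / 2)) * hAu
          have key2 : (1 + h ^ 2 * y ^ 2) ^ (s / 2) ≤ (1 + x ^ 2) ^ (s / 2) *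
              (1 + h ^ 2 * y ^ 2) ^ (s / 2) *
              ((1 + x ^ 2) ^ (-(s / 2)) + (1 + y ^ 2) ^ (-(s / 2))) := by
            rw [expand]
            nlinarith [mul_nonneg (mul_nonneg hA' hB') hv]
          exact mul_le_mul_of_nonneg_left key2 h2s

private noncomputable def Phi (s : ℝ) {n : ℕ} (f : EuclideanSpace ℝ (Fin n) → ℂ)
    (t : EuclideanSpace ℝ (Fin n)) : ℝ≥0∞ :=
  ENNReal.ofReal ((((1:ℝ) + ‖t‖ ^ 2) ^ (s / 2)) * ‖f t‖)

private noncomputable def Gam (s h : ℝ) {n : ℕ} (g : EuclideanSpace ℝ (Fin n) → ℂ)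
    (u : EuclideanSpace ℝ (Fin n)) : ℝ≥0∞ :=
  ENNReal.ofReal ((((1:ℝ) + h ^ 2 * ‖u‖ ^ 2) ^ (s / 2)) * ‖g u‖)

private lemma Phi_sq (s : ℝ) {n : ℕ} (f : EuclideanSpace ℝ (Fin n) → ℂ)
    (t : EuclideanSpace ℝ (Fin n)) :
    Phi s f t ^ (2:ℕ) = ENNReal.ofReal (((1:ℝ) + ‖t‖ ^ 2) ^ s * ‖f t‖ ^ 2) := by
  rw [Phi, ← ENNReal.ofReal_pow (by positivity), mul_pow,
    ← Real.rpow_natCast (((1:ℝ) + ‖t‖ ^ 2) ^ (s / 2)) 2,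
    ← Real.rpow_mul (by positivity)]
  norm_num

private lemma Gam_sq (s h : ℝ) {n : ℕ} (g : EuclideanSpace ℝ (Fin n) → ℂ)
    (u : EuclideanSpace ℝ (Fin n)) :
    Gam s h g u ^ (2:ℕ) = ENNReal.ofReal (((1:ℝ) + h ^ 2 * ‖u‖ ^ 2) ^ s * ‖g u‖ ^ 2) := by
  rw [Gam, ← ENNReal.ofReal_pow (by positivity), mul_pow,
    ← Real.rpow_natCast (((1:ℝ) + h ^ 2 * ‖u‖ ^ 2) ^ (s / 2)) 2,
    ← Real.rpow_mul (by positivity)]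
  norm_num

private lemma Phi_aemeasurable (s : ℝ) {n : ℕ} {f : EuclideanSpace ℝ (Fin n) → ℂ}
    (hf : AEStronglyMeasurable f volume) : AEMeasurable (Phi s f) volume :=
  ((((continuous_const.add (continuous_norm.pow 2)).rpow_const
    (fun _ => Or.inl (by simp only [Pi.add_apply, Pi.mul_apply, Pi.pow_apply]; positivity))).measurable.aemeasurable).mul
    hf.norm.aemeasurable).ennreal_ofReal

private lemma Gam_aemeasurable (s h : ℝ) {n : ℕ} {g : EuclideanSpace ℝ (Fin n) → ℂ}
    (hg : AEStronglyMeasurable g volume) : AEMeasurable (Gam s h g) volume :=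
  ((((continuous_const.add (continuous_const.mul (continuous_norm.pow 2))).rpow_const
    (fun _ => Or.inl (by simp only [Pi.add_apply, Pi.mul_apply, Pi.pow_apply]; positivity))).measurable.aemeasurable).mul
    hg.norm.aemeasurable).ennreal_ofReal

private lemma Phi_ne_top (s : ℝ) {n : ℕ} (f : EuclideanSpace ℝ (Fin n) → ℂ) (t) :
    Phi s f t ≠ ⊤ := ENNReal.ofReal_ne_top

private lemma Gam_ne_top (s h : ℝ) {n : ℕ} (g : EuclideanSpace ℝ (Fin n) → ℂ) (u) :
    Gam s h g u ≠ ⊤ := ENNReal.ofReal_ne_top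

theorem stmt_2 (n : ℕ) (s : ℝ) (hs : s > n / 2) :
    ∃ C > 0, ∀ h : ℝ, h ∈ Set.Ioc (0 : ℝ) 1 →
      ∀ f g : EuclideanSpace ℝ (Fin n) → ℂ,
        AEStronglyMeasurable f volume → AEStronglyMeasurable g volume →
        Integrable (fun ξ => (1 + ‖ξ‖ ^ 2) ^ s * ‖f ξ‖ ^ 2) volume →
        Integrable (fun ξ => (1 + h ^ 2 * ‖ξ‖ ^ 2) ^ s * ‖g ξ‖ ^ 2) volume →
        Integrable (fun ξ =>
            (1 + h ^ 2 * ‖ξ‖ ^ 2) ^ s *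
              ‖(f ⋆[ContinuousLinearMap.mul ℝ ℂ] g) ξ‖ ^ 2) volume ∧
        (∫ ξ, (1 + h ^ 2 * ‖ξ‖ ^ 2) ^ s *
              ‖(f ⋆[ContinuousLinearMap.mul ℝ ℂ] g) ξ‖ ^ 2) ^ (1 / 2 : ℝ) ≤
          C * ((∫ ξ, (1 + ‖ξ‖ ^ 2) ^ s * ‖f ξ‖ ^ 2) ^ (1 / 2 : ℝ) *
               (∫ ξ, (1 + h ^ 2 * ‖ξ‖ ^ 2) ^ s * ‖g ξ‖ ^ 2) ^ (1 / 2 : ℝ)) := by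
  have hs0 : 0 < s := lt_of_le_of_lt (by positivity) hs
  have hwInt : Integrable (fun ζ : EuclideanSpace ℝ (Fin n) => ((1:ℝ) + ‖ζ‖ ^ 2) ^ (-s))
      volume := by
    have h1 : ((Module.finrank ℝ (EuclideanSpace ℝ (Fin n)) : ℝ)) < 2 * s := by
      rw [finrank_euclideanSpace_fin]; linarith
    have := integrable_rpow_neg_one_add_norm_sq
      (μ := (volume : Measure (EuclideanSpace ℝ (Fin n)))) h1
    simpa [show -(2*s)/2 = -s by ring] using this
  set cI := ∫⁻ ζ : EuclideanSpace ℝ (Fin n), ENNReal.ofReal (((1:ℝ) + ‖ζ‖ ^ 2) ^ (-s))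
    with hcIdef
  have hcI : cI < ⊤ := hwInt.lintegral_lt_top
  set Ks : ℝ≥0∞ := ENNReal.ofReal ((2:ℝ) ^ s) ^ (2:ℕ) * (4 * cI) with hKsdef
  have hKsTop : Ks ≠ ⊤ := by
    rw [hKsdef]
    exact ENNReal.mul_ne_top (by simp) (ENNReal.mul_ne_top (by simp) hcI.ne)
  clear_value cI Ks
  refine ⟨Ks.toReal ^ (1/2 : ℝ) + 1, by positivity, ?_⟩
  rintro h ⟨hh0, hh1⟩ f g hf hg hFint hGint
  -- measurable decaying weight
  have hwm : Measurable (fun ζ : EuclideanSpace ℝ (Fin n) =>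
      ENNReal.ofReal (((1:ℝ) + ‖ζ‖ ^ 2) ^ (-s))) :=
    (((continuous_const.add (continuous_norm.pow 2)).rpow_const
      (fun _ => Or.inl (by simp only [Pi.add_apply, Pi.mul_apply, Pi.pow_apply]; positivity))).measurable).ennreal_ofReal
  have hcI_trans : ∀ ξ : EuclideanSpace ℝ (Fin n),
      (∫⁻ t, ENNReal.ofReal (((1:ℝ) + ‖ξ - t‖ ^ 2) ^ (-s))) = cI := fun ξ =>
    ((Measure.measurePreserving_sub_left volume ξ).lintegral_comp hwm).trans hcIdef.symm
  have hΦm : AEMeasurable (Phi s f) volume := Phi_aemeasurable s hf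
  have hΓm : AEMeasurable (Gam s h g) volume := Gam_aemeasurable s h hg
  have hκc : Continuous (fun t : EuclideanSpace ℝ (Fin n) =>
      ((1:ℝ) + ‖t‖ ^ 2) ^ (-(s/2))) :=
    (continuous_const.add (continuous_norm.pow 2)).rpow_const (fun _ => Or.inl (by simp only [Pi.add_apply, Pi.mul_apply, Pi.pow_apply]; positivity))
  -- main pointwise (in ξ) estimate
  have main : ∀ ξ, ENNReal.ofReal (((1:ℝ) + h ^ 2 * ‖ξ‖ ^ 2) ^ s *
      ‖(f ⋆[ContinuousLinearMap.mul ℝ ℂ] g) ξ‖ ^ 2)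
      ≤ Ks * ∫⁻ t, Phi s f t ^ (2:ℕ) * Gam s h g (ξ - t) ^ (2:ℕ) := by
    intro ξ
    -- the kernel
    set κ : EuclideanSpace ℝ (Fin n) → ℝ≥0∞ := fun t =>
      ENNReal.ofReal (((1:ℝ) + ‖t‖ ^ 2) ^ (-(s/2))) +
      ENNReal.ofReal (((1:ℝ) + ‖ξ - t‖ ^ 2) ^ (-(s/2))) with hκdef
    have hκm : Measurable κ := by
      rw [hκdef]
      exact (hκc.measurable.ennreal_ofReal).add
        ((hκc.comp (continuous_const.sub continuous_id)).measurable.ennreal_ofReal)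
    have hκ2 : ∀ t, κ t ^ (2:ℕ) ≤ 2 * ENNReal.ofReal (((1:ℝ) + ‖t‖ ^ 2) ^ (-s)) +
        2 * ENNReal.ofReal (((1:ℝ) + ‖ξ - t‖ ^ 2) ^ (-s)) := by
      intro t
      have e1 : ((((1:ℝ) + ‖t‖ ^ 2) ^ (-(s/2)))) ^ (2:ℕ) = ((1:ℝ) + ‖t‖ ^ 2) ^ (-s) := by
        rw [← Real.rpow_natCast (((1:ℝ) + ‖t‖ ^ 2) ^ (-(s/2))) 2,
          ← Real.rpow_mul (by positivity)]
        norm_num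
      have e1' : ((((1:ℝ) + ‖ξ - t‖ ^ 2) ^ (-(s/2)))) ^ (2:ℕ)
          = ((1:ℝ) + ‖ξ - t‖ ^ 2) ^ (-s) := by
        rw [← Real.rpow_natCast (((1:ℝ) + ‖ξ - t‖ ^ 2) ^ (-(s/2))) 2,
          ← Real.rpow_mul (by positivity)]
        norm_num
      calc κ t ^ (2:ℕ)
          = ENNReal.ofReal ((((1:ℝ) + ‖t‖ ^ 2) ^ (-(s/2)) +
              ((1:ℝ) + ‖ξ - t‖ ^ 2) ^ (-(s/2))) ^ (2:ℕ)) := by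
            show (ENNReal.ofReal (((1:ℝ) + ‖t‖ ^ 2) ^ (-(s/2))) +
              ENNReal.ofReal (((1:ℝ) + ‖ξ - t‖ ^ 2) ^ (-(s/2)))) ^ (2:ℕ) = _
            rw [← ENNReal.ofReal_add (by positivity) (by positivity),
              ← ENNReal.ofReal_pow (by positivity)]
        _ ≤ ENNReal.ofReal (2 * ((1:ℝ) + ‖t‖ ^ 2) ^ (-s) +
              2 * ((1:ℝ) + ‖ξ - t‖ ^ 2) ^ (-s)) := by
            apply ENNReal.ofReal_le_ofReal
            nlinarith [sq_nonneg (((1:ℝ) + ‖t‖ ^ 2) ^ (-(s/2)) -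
              ((1:ℝ) + ‖ξ - t‖ ^ 2) ^ (-(s/2))), e1, e1']
        _ = 2 * ENNReal.ofReal (((1:ℝ) + ‖t‖ ^ 2) ^ (-s)) +
              2 * ENNReal.ofReal (((1:ℝ) + ‖ξ - t‖ ^ 2) ^ (-s)) := by
            rw [ENNReal.ofReal_add (by positivity) (by positivity),
              ENNReal.ofReal_mul (by norm_num), ENNReal.ofReal_mul (by norm_num)]
            norm_num
    have hκint : ∫⁻ t, κ t ^ (2:ℕ) ≤ 4 * cI := by
      calc ∫⁻ t, κ t ^ (2:ℕ)
          ≤ ∫⁻ t, (2 * ENNReal.ofReal (((1:ℝ) + ‖t‖ ^ 2) ^ (-s)) +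
              2 * ENNReal.ofReal (((1:ℝ) + ‖ξ - t‖ ^ 2) ^ (-s))) := lintegral_mono hκ2
        _ = 2 * cI + 2 * cI := by
            rw [lintegral_add_left (hwm.const_mul 2),
              lintegral_const_mul' 2 _ (by norm_num),
              lintegral_const_mul' 2 _ (by norm_num), hcI_trans ξ, ← hcIdef]
        _ = 4 * cI := by ring
    -- Step A : bound the norm of the convolution
    have stepA : ENNReal.ofReal ‖(f ⋆[ContinuousLinearMap.mul ℝ ℂ] g) ξ‖ ≤
        ∫⁻ t, ENNReal.ofReal (‖f t‖ * ‖g (ξ - t)‖) := by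
      have hc : (f ⋆[ContinuousLinearMap.mul ℝ ℂ] g) ξ = ∫ t, f t * g (ξ - t) := by
        simp [convolution_def]
      rw [hc, ofReal_norm]
      refine le_trans (enorm_integral_le_lintegral_enorm _) (le_of_eq ?_)
      refine lintegral_congr fun t => ?_
      rw [← ofReal_norm, norm_mul]
    -- Step C : pointwise (in t) estimate
    have stepC : ∀ t, ENNReal.ofReal (((1:ℝ) + h ^ 2 * ‖ξ‖ ^ 2) ^ (s/2)) *
        ENNReal.ofReal (‖f t‖ * ‖g (ξ - t)‖) ≤
        ENNReal.ofReal ((2:ℝ) ^ s) * ((Phi s f t * Gam s h g (ξ - t)) * κ t) := by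
      intro t
      have hk := key_scalar hs0 hh0.le hh1 (norm_nonneg t) (norm_nonneg (ξ - t)) (norm_nonneg ξ)
        (by simpa using norm_add_le t (ξ - t))
      have hreal : ((1:ℝ) + h ^ 2 * ‖ξ‖ ^ 2) ^ (s/2) * (‖f t‖ * ‖g (ξ - t)‖) ≤
          (2:ℝ) ^ s * (((((1:ℝ) + ‖t‖ ^ 2) ^ (s/2)) * ‖f t‖) *
            ((((1:ℝ) + h ^ 2 * ‖ξ - t‖ ^ 2) ^ (s/2)) * ‖g (ξ - t)‖) *
            (((1:ℝ) + ‖t‖ ^ 2) ^ (-(s/2)) + ((1:ℝ) + ‖ξ - t‖ ^ 2) ^ (-(s/2)))) := by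
        calc ((1:ℝ) + h ^ 2 * ‖ξ‖ ^ 2) ^ (s/2) * (‖f t‖ * ‖g (ξ - t)‖)
            ≤ ((2:ℝ) ^ s * (((1:ℝ) + ‖t‖ ^ 2) ^ (s/2) *
                ((1:ℝ) + h ^ 2 * ‖ξ - t‖ ^ 2) ^ (s/2) *
                (((1:ℝ) + ‖t‖ ^ 2) ^ (-(s/2)) + ((1:ℝ) + ‖ξ - t‖ ^ 2) ^ (-(s/2))))) *
              (‖f t‖ * ‖g (ξ - t)‖) :=
              mul_le_mul_of_nonneg_right hk (by positivity)
          _ = _ := by ring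
      calc ENNReal.ofReal (((1:ℝ) + h ^ 2 * ‖ξ‖ ^ 2) ^ (s/2)) *
          ENNReal.ofReal (‖f t‖ * ‖g (ξ - t)‖)
          = ENNReal.ofReal (((1:ℝ) + h ^ 2 * ‖ξ‖ ^ 2) ^ (s/2) * (‖f t‖ * ‖g (ξ - t)‖)) :=
            (ENNReal.ofReal_mul (by positivity)).symm
        _ ≤ ENNReal.ofReal ((2:ℝ) ^ s * (((((1:ℝ) + ‖t‖ ^ 2) ^ (s/2)) * ‖f t‖) *
              ((((1:ℝ) + h ^ 2 * ‖ξ - t‖ ^ 2) ^ (s/2)) * ‖g (ξ - t)‖) *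
              (((1:ℝ) + ‖t‖ ^ 2) ^ (-(s/2)) + ((1:ℝ) + ‖ξ - t‖ ^ 2) ^ (-(s/2))))) :=
            ENNReal.ofReal_le_ofReal hreal
        _ = ENNReal.ofReal ((2:ℝ) ^ s) * ((Phi s f t * Gam s h g (ξ - t)) * κ t) := by
            rw [ENNReal.ofReal_mul (by positivity), ENNReal.ofReal_mul (by positivity),
              ENNReal.ofReal_mul (by positivity),
              ENNReal.ofReal_add (by positivity) (by positivity)]
            rfl
    -- Cauchy–Schwarz
    have hΦΓm : AEMeasurable (fun t => Phi s f t * Gam s h g (ξ - t)) volume := by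
      refine hΦm.mul ?_
      exact hΓm.comp_quasiMeasurePreserving
        ((Measure.measurePreserving_sub_left volume ξ).quasiMeasurePreserving)
    have CS := ENNReal.lintegral_mul_le_Lp_mul_Lq volume
      (Real.HolderConjugate.two_two : Real.HolderConjugate 2 2) hΦΓm hκm.aemeasurable
    simp only [Pi.mul_apply] at CS
    have e2 : ∀ x : ℝ≥0∞, x ^ (2:ℝ) = x ^ (2:ℕ) := fun x => by
      rw [show (2:ℝ) = ((2:ℕ):ℝ) by norm_num, ENNReal.rpow_natCast]
    have hchain : ENNReal.ofReal (((1:ℝ) + h ^ 2 * ‖ξ‖ ^ 2) ^ (s/2)) *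
        ENNReal.ofReal ‖(f ⋆[ContinuousLinearMap.mul ℝ ℂ] g) ξ‖ ≤
        ENNReal.ofReal ((2:ℝ) ^ s) *
          ((∫⁻ t, Phi s f t ^ (2:ℕ) * Gam s h g (ξ - t) ^ (2:ℕ)) ^ (1/2:ℝ) *
            (4 * cI) ^ (1/2:ℝ)) := by
      calc ENNReal.ofReal (((1:ℝ) + h ^ 2 * ‖ξ‖ ^ 2) ^ (s/2)) *
          ENNReal.ofReal ‖(f ⋆[ContinuousLinearMap.mul ℝ ℂ] g) ξ‖
          ≤ ENNReal.ofReal (((1:ℝ) + h ^ 2 * ‖ξ‖ ^ 2) ^ (s/2)) *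
            ∫⁻ t, ENNReal.ofReal (‖f t‖ * ‖g (ξ - t)‖) := mul_le_mul_right stepA _
        _ = ∫⁻ t, ENNReal.ofReal (((1:ℝ) + h ^ 2 * ‖ξ‖ ^ 2) ^ (s/2)) *
              ENNReal.ofReal (‖f t‖ * ‖g (ξ - t)‖) :=
            (lintegral_const_mul' _ _ ENNReal.ofReal_ne_top).symm
        _ ≤ ∫⁻ t, ENNReal.ofReal ((2:ℝ) ^ s) * ((Phi s f t * Gam s h g (ξ - t)) * κ t) :=
            lintegral_mono stepC
        _ = ENNReal.ofReal ((2:ℝ) ^ s) * ∫⁻ t, (Phi s f t * Gam s h g (ξ - t)) * κ t :=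
            lintegral_const_mul' _ _ ENNReal.ofReal_ne_top
        _ ≤ ENNReal.ofReal ((2:ℝ) ^ s) *
              ((∫⁻ t, (Phi s f t * Gam s h g (ξ - t)) ^ (2:ℝ)) ^ (1/2:ℝ) *
                (∫⁻ t, κ t ^ (2:ℝ)) ^ (1/2:ℝ)) := mul_le_mul_right CS _
        _ ≤ _ := by
            refine mul_le_mul_right (mul_le_mul' (le_of_eq ?_)
              (ENNReal.rpow_le_rpow ?_ (by norm_num))) _
            · congr 1
              refine lintegral_congr fun t => ?_
              rw [ENNReal.mul_rpow_of_nonneg _ _ (by norm_num : (0:ℝ) ≤ 2), e2, e2]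
            · calc ∫⁻ t, κ t ^ (2:ℝ) = ∫⁻ t, κ t ^ (2:ℕ) := lintegral_congr fun t => e2 _
                _ ≤ 4 * cI := hκint
    have hhalf : ∀ x : ℝ≥0∞, (x ^ (1/2:ℝ)) ^ (2:ℕ) = x := fun x => by
      rw [← e2, ← ENNReal.rpow_mul]
      norm_num
    calc ENNReal.ofReal (((1:ℝ) + h ^ 2 * ‖ξ‖ ^ 2) ^ s *
        ‖(f ⋆[ContinuousLinearMap.mul ℝ ℂ] g) ξ‖ ^ 2)
        = (ENNReal.ofReal (((1:ℝ) + h ^ 2 * ‖ξ‖ ^ 2) ^ (s/2)) *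
            ENNReal.ofReal ‖(f ⋆[ContinuousLinearMap.mul ℝ ℂ] g) ξ‖) ^ (2:ℕ) := by
          have e1 : ((1:ℝ) + h ^ 2 * ‖ξ‖ ^ 2) ^ s
              = (((1:ℝ) + h ^ 2 * ‖ξ‖ ^ 2) ^ (s/2)) ^ (2:ℕ) := by
            rw [← Real.rpow_natCast (((1:ℝ) + h ^ 2 * ‖ξ‖ ^ 2) ^ (s/2)) 2,
              ← Real.rpow_mul (by positivity)]
            norm_num
          rw [e1, ← mul_pow, ENNReal.ofReal_pow (by positivity),
            ENNReal.ofReal_mul (by positivity)]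
      _ ≤ (ENNReal.ofReal ((2:ℝ) ^ s) *
            ((∫⁻ t, Phi s f t ^ (2:ℕ) * Gam s h g (ξ - t) ^ (2:ℕ)) ^ (1/2:ℝ) *
              (4 * cI) ^ (1/2:ℝ))) ^ (2:ℕ) := pow_le_pow_left₀ (by positivity) hchain 2
      _ = Ks * ∫⁻ t, Phi s f t ^ (2:ℕ) * Gam s h g (ξ - t) ^ (2:ℕ) := by
          rw [mul_pow, mul_pow, hhalf, hhalf, hKsdef]
          ring
  -- Tonelli
  have hTon : (∫⁻ ξ, ∫⁻ t, Phi s f t ^ (2:ℕ) * Gam s h g (ξ - t) ^ (2:ℕ)) =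
      (∫⁻ t, Phi s f t ^ (2:ℕ)) * ∫⁻ u, Gam s h g u ^ (2:ℕ) := by
    have hprod : AEMeasurable (fun p : EuclideanSpace ℝ (Fin n) × EuclideanSpace ℝ (Fin n) =>
        Phi s f p.2 ^ (2:ℕ) * Gam s h g (p.1 - p.2) ^ (2:ℕ)) (volume.prod volume) := by
      have h1 : AEMeasurable (fun p : EuclideanSpace ℝ (Fin n) × EuclideanSpace ℝ (Fin n) =>
          Phi s f p.2 ^ (2:ℕ)) (volume.prod volume) :=
        (hΦm.pow_const 2).comp_quasiMeasurePreserving Measure.quasiMeasurePreserving_snd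
      have h2 : AEMeasurable (fun p : EuclideanSpace ℝ (Fin n) × EuclideanSpace ℝ (Fin n) =>
          Gam s h g (p.1 - p.2) ^ (2:ℕ)) (volume.prod volume) :=
        (hΓm.pow_const 2).comp_quasiMeasurePreserving
          (quasiMeasurePreserving_sub_of_right_invariant volume volume)
      exact h1.mul h2
    rw [lintegral_lintegral_swap hprod]
    calc ∫⁻ t, ∫⁻ ξ, Phi s f t ^ (2:ℕ) * Gam s h g (ξ - t) ^ (2:ℕ)
        = ∫⁻ t, Phi s f t ^ (2:ℕ) * ∫⁻ ξ, Gam s h g (ξ - t) ^ (2:ℕ) :=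
          lintegral_congr fun t =>
            lintegral_const_mul' _ _ (ENNReal.pow_ne_top (Phi_ne_top s f t))
      _ = ∫⁻ t, Phi s f t ^ (2:ℕ) * ∫⁻ u, Gam s h g u ^ (2:ℕ) := by
          refine lintegral_congr fun t => ?_
          congr 1
          have hmp := measurePreserving_sub_right
            (volume : Measure (EuclideanSpace ℝ (Fin n))) t
          have hm2 : AEMeasurable (fun u => Gam s h g u ^ (2:ℕ))
              (Measure.map (· - t) volume) := by
            rw [hmp.map_eq]; exact hΓm.pow_const 2
          calc ∫⁻ ξ, Gam s h g (ξ - t) ^ (2:ℕ)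
              = ∫⁻ u, Gam s h g u ^ (2:ℕ) ∂(Measure.map (· - t) volume) :=
              (lintegral_map' hm2 hmp.measurable.aemeasurable).symm
            _ = _ := by rw [hmp.map_eq]
      _ = (∫⁻ t, Phi s f t ^ (2:ℕ)) * ∫⁻ u, Gam s h g u ^ (2:ℕ) :=
          lintegral_mul_const'' _ (hΦm.pow_const 2)
  -- finiteness
  have hΦfin : (∫⁻ t, Phi s f t ^ (2:ℕ)) < ⊤ := by
    calc (∫⁻ t, Phi s f t ^ (2:ℕ))
        = ∫⁻ t, ENNReal.ofReal (((1:ℝ) + ‖t‖ ^ 2) ^ s * ‖f t‖ ^ 2) :=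
          lintegral_congr fun t => Phi_sq s f t
      _ < ⊤ := hFint.lintegral_lt_top
  have hΓfin : (∫⁻ u, Gam s h g u ^ (2:ℕ)) < ⊤ := by
    calc (∫⁻ u, Gam s h g u ^ (2:ℕ))
        = ∫⁻ u, ENNReal.ofReal (((1:ℝ) + h ^ 2 * ‖u‖ ^ 2) ^ s * ‖g u‖ ^ 2) :=
          lintegral_congr fun u => Gam_sq s h g u
      _ < ⊤ := hGint.lintegral_lt_top
  have hXle : (∫⁻ ξ, ENNReal.ofReal (((1:ℝ) + h ^ 2 * ‖ξ‖ ^ 2) ^ s *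
      ‖(f ⋆[ContinuousLinearMap.mul ℝ ℂ] g) ξ‖ ^ 2)) ≤
      Ks * ((∫⁻ t, Phi s f t ^ (2:ℕ)) * ∫⁻ u, Gam s h g u ^ (2:ℕ)) := by
    calc (∫⁻ ξ, ENNReal.ofReal (((1:ℝ) + h ^ 2 * ‖ξ‖ ^ 2) ^ s *
        ‖(f ⋆[ContinuousLinearMap.mul ℝ ℂ] g) ξ‖ ^ 2))
        ≤ ∫⁻ ξ, Ks * ∫⁻ t, Phi s f t ^ (2:ℕ) * Gam s h g (ξ - t) ^ (2:ℕ) :=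
          lintegral_mono main
      _ = Ks * ∫⁻ ξ, ∫⁻ t, Phi s f t ^ (2:ℕ) * Gam s h g (ξ - t) ^ (2:ℕ) :=
          lintegral_const_mul' _ _ hKsTop
      _ = _ := by rw [hTon]
  have hXfin : (∫⁻ ξ, ENNReal.ofReal (((1:ℝ) + h ^ 2 * ‖ξ‖ ^ 2) ^ s *
      ‖(f ⋆[ContinuousLinearMap.mul ℝ ℂ] g) ξ‖ ^ 2)) < ⊤ :=
    lt_of_le_of_lt hXle (ENNReal.mul_lt_top hKsTop.lt_top
      (ENNReal.mul_lt_top hΦfin hΓfin))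
  -- measurability of the convolution
  have hconv : AEStronglyMeasurable (f ⋆[ContinuousLinearMap.mul ℝ ℂ] g) volume :=
    (hf.convolution_integrand (ContinuousLinearMap.mul ℝ ℂ) hg).integral_prod_right'
  have hwcont : Continuous (fun ξ : EuclideanSpace ℝ (Fin n) =>
      ((1:ℝ) + h ^ 2 * ‖ξ‖ ^ 2) ^ s) :=
    (continuous_const.add (continuous_const.mul (continuous_norm.pow 2))).rpow_const
      (fun _ => Or.inl (by simp only [Pi.add_apply, Pi.mul_apply, Pi.pow_apply]; positivity))
  have hXaesm : AEStronglyMeasurable (fun ξ => ((1:ℝ) + h ^ 2 * ‖ξ‖ ^ 2) ^ s *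
      ‖(f ⋆[ContinuousLinearMap.mul ℝ ℂ] g) ξ‖ ^ 2) volume := by
    apply hwcont.aestronglyMeasurable.mul
    have hn := hconv.norm
    have : (fun ξ => ‖(f ⋆[ContinuousLinearMap.mul ℝ ℂ] g) ξ‖ ^ 2)
        = fun ξ => ‖(f ⋆[ContinuousLinearMap.mul ℝ ℂ] g) ξ‖ *
          ‖(f ⋆[ContinuousLinearMap.mul ℝ ℂ] g) ξ‖ := by
      funext ξ; ring
    rw [this]
    exact hn.mul hn
  constructor
  · exact ⟨hXaesm, (hasFiniteIntegral_iff_ofReal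
      (ae_of_all _ fun ξ => by positivity)).2 hXfin⟩
  · have hXeq : (∫ ξ, ((1:ℝ) + h ^ 2 * ‖ξ‖ ^ 2) ^ s *
        ‖(f ⋆[ContinuousLinearMap.mul ℝ ℂ] g) ξ‖ ^ 2)
        = (∫⁻ ξ, ENNReal.ofReal (((1:ℝ) + h ^ 2 * ‖ξ‖ ^ 2) ^ s *
          ‖(f ⋆[ContinuousLinearMap.mul ℝ ℂ] g) ξ‖ ^ 2)).toReal :=
      integral_eq_lintegral_of_nonneg_ae (ae_of_all _ fun ξ => by positivity) hXaesm
    have hFeq : (∫ ξ, ((1:ℝ) + ‖ξ‖ ^ 2) ^ s * ‖f ξ‖ ^ 2)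
        = (∫⁻ t, Phi s f t ^ (2:ℕ)).toReal := by
      rw [integral_eq_lintegral_of_nonneg_ae (ae_of_all _ fun ξ => by positivity) hFint.1]
      congr 1
      exact lintegral_congr fun t => (Phi_sq s f t).symm
    have hGeq : (∫ ξ, ((1:ℝ) + h ^ 2 * ‖ξ‖ ^ 2) ^ s * ‖g ξ‖ ^ 2)
        = (∫⁻ u, Gam s h g u ^ (2:ℕ)).toReal := by
      rw [integral_eq_lintegral_of_nonneg_ae (ae_of_all _ fun ξ => by positivity) hGint.1]
      congr 1
      exact lintegral_congr fun u => (Gam_sq s h g u).symm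
    rw [hXeq, hFeq, hGeq]
    have h1 : (∫⁻ ξ, ENNReal.ofReal (((1:ℝ) + h ^ 2 * ‖ξ‖ ^ 2) ^ s *
        ‖(f ⋆[ContinuousLinearMap.mul ℝ ℂ] g) ξ‖ ^ 2)).toReal ≤
        (Ks * ((∫⁻ t, Phi s f t ^ (2:ℕ)) * ∫⁻ u, Gam s h g u ^ (2:ℕ))).toReal :=
      ENNReal.toReal_mono (ENNReal.mul_ne_top hKsTop
        (ENNReal.mul_ne_top hΦfin.ne hΓfin.ne)) hXle
    calc (∫⁻ ξ, ENNReal.ofReal (((1:ℝ) + h ^ 2 * ‖ξ‖ ^ 2) ^ s *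
        ‖(f ⋆[ContinuousLinearMap.mul ℝ ℂ] g) ξ‖ ^ 2)).toReal ^ (1/2:ℝ)
        ≤ ((Ks * ((∫⁻ t, Phi s f t ^ (2:ℕ)) * ∫⁻ u, Gam s h g u ^ (2:ℕ))).toReal) ^ (1/2:ℝ) :=
          Real.rpow_le_rpow ENNReal.toReal_nonneg h1 (by norm_num)
      _ = Ks.toReal ^ (1/2:ℝ) * ((∫⁻ t, Phi s f t ^ (2:ℕ)).toReal ^ (1/2:ℝ) *
            (∫⁻ u, Gam s h g u ^ (2:ℕ)).toReal ^ (1/2:ℝ)) := by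
          rw [ENNReal.toReal_mul, ENNReal.toReal_mul,
            Real.mul_rpow ENNReal.toReal_nonneg
              (mul_nonneg ENNReal.toReal_nonneg ENNReal.toReal_nonneg),
            Real.mul_rpow ENNReal.toReal_nonneg ENNReal.toReal_nonneg]
      _ ≤ (Ks.toReal ^ (1/2:ℝ) + 1) * ((∫⁻ t, Phi s f t ^ (2:ℕ)).toReal ^ (1/2:ℝ) *
            (∫⁻ u, Gam s h g u ^ (2:ℕ)).toReal ^ (1/2:ℝ)) :=
          mul_le_mul_of_nonneg_right (by linarith) (by positivity)
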